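/- arXiv:2107.11205 — 5 statements merged into one kernel-verified Lean document; each statement's English description precedes it below -/
import Mathlib

section
/- For odd n, there exists a balanced Boolean function on n variables that is (n−1)-th order dual sensitive. Concretely: fix y ∈ F_2^n; the function g defined by g(y^(S)) = 0 for all S of odd size ≤ n−2 and at y itself, g(y^(S)) = 1 for all S of even size with 2 ≤ |S| ≤ n−1, and g(complement of y) = 1, is balanced (takes value 0 on exactly 2^{n−1} inputs) and (n−1)-th order dual sensitive at y. -/
/-- Flip the bits of `x` indexed by `S`. -/
def flipS {ι : Type*} [DecidableEq ι] (x : ι → Bool) (S : Finset ι) : ι → Bool :=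
  fun i => if i ∈ S then !x i else x i

/-- The set of coordinates where `x` differs from `y`. -/
def Dst {n : ℕ} (y x : Fin n → Bool) : Finset (Fin n) :=
  Finset.univ.filter (fun i => x i ≠ y i)

lemma Dst_flip {n : ℕ} (y : Fin n → Bool) (S : Finset (Fin n)) : Dst y (flipS y S) = S := by
  ext i
  simp only [Dst, flipS, Finset.mem_filter, Finset.mem_univ, true_and]
  by_cases h : i ∈ S <;> simp [h]

lemma flip_Dst {n : ℕ} (y : Fin n → Bool) (x : Fin n → Bool) : flipS y (Dst y x) = x := by
  funext i
  simp only [Dst, flipS, Finset.mem_filter, Finset.mem_univ, true_and]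
  rcases Bool.eq_false_or_eq_true (x i) with h1 | h1 <;>
    rcases Bool.eq_false_or_eq_true (y i) with h2 | h2 <;> simp [h1, h2]

lemma Dst_self {n : ℕ} (y : Fin n → Bool) : Dst y y = ∅ := by simp [Dst]

lemma Dst_compl {n : ℕ} (y : Fin n → Bool) : Dst y (fun i => !y i) = Finset.univ := by
  ext i; simp [Dst]


lemma odd_filter_card {n : ℕ} (hn : 0 < n) :
    ((Finset.univ : Finset (Finset (Fin n))).filter (fun S => Odd S.card)).card
      = 2 ^ (n - 1) := by
  set i0 : Fin n := ⟨0, hn⟩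
  set τ : Finset (Fin n) → Finset (Fin n) :=
    fun S => if i0 ∈ S then S.erase i0 else insert i0 S with hτ
  have hparity : ∀ S : Finset (Fin n), Odd (τ S).card ↔ ¬ Odd S.card := by
    intro S
    by_cases h : i0 ∈ S
    · have : (S.erase i0).card + 1 = S.card := Finset.card_erase_add_one h
      simp only [hτ, if_pos h, Nat.odd_iff, Nat.not_odd_iff_even, Nat.even_iff]
      omega
    · have : (insert i0 S).card = S.card + 1 := Finset.card_insert_of_notMem h
      simp only [hτ, if_neg h, this, Nat.odd_iff, Nat.not_odd_iff_even, Nat.even_iff]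
      omega
  have hinv : ∀ S : Finset (Fin n), τ (τ S) = S := by
    intro S
    by_cases h : i0 ∈ S
    · simp [hτ, if_pos h, Finset.notMem_erase, Finset.insert_erase h]
    · have h2 : i0 ∈ insert i0 S := Finset.mem_insert_self _ _
      simp only [hτ, if_neg h, if_pos h2, Finset.erase_insert h]
  have hcard : ((Finset.univ : Finset (Finset (Fin n))).filter (fun S => Odd S.card)).card
      = ((Finset.univ : Finset (Finset (Fin n))).filter (fun S => ¬ Odd S.card)).card := by
    apply Finset.card_nbij' τ τ
    · intro S hS
      simp only [Finset.mem_coe, Finset.mem_filter, Finset.mem_univ, true_and] at *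
      have h2 := hparity (τ S)
      rw [hinv] at h2
      exact h2.mp hS
    · intro S hS
      simp only [Finset.mem_coe, Finset.mem_filter, Finset.mem_univ, true_and] at *
      exact (hparity S).mpr hS
    · intro S _; exact hinv S
    · intro S _; exact hinv S
  have htot := Finset.card_filter_add_card_filter_not
    (s := (Finset.univ : Finset (Finset (Fin n)))) (p := fun S => Odd S.card)
  have h2n : (Finset.univ : Finset (Finset (Fin n))).card = 2 ^ n := by
    simp [Finset.card_univ]
  have hpow : 2 ^ n = 2 * 2 ^ (n - 1) := by
    rw [← pow_succ']
    congr 1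
    omega
  omega

lemma T_card {n : ℕ} (hn : Odd n) :
    ((Finset.univ : Finset (Finset (Fin n))).filter
      (fun S => S.card = 0 ∨ (Odd S.card ∧ S.card ≠ n))).card = 2 ^ (n - 1) := by
  have hn0 : 0 < n := hn.pos
  rw [← odd_filter_card hn0]
  have huniv_card : (Finset.univ : Finset (Fin n)).card = n := by simp
  have huniv_ne : (Finset.univ : Finset (Fin n)) ≠ ∅ := by
    intro h
    rw [← Finset.card_eq_zero, huniv_card] at h
    omega
  apply Finset.card_nbij' (fun S => if S = ∅ then Finset.univ else S)
    (fun S => if S = Finset.univ then ∅ else S)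
  · intro S hS
    simp only [Finset.mem_coe, Finset.mem_filter, Finset.mem_univ, true_and] at *
    by_cases h : S = ∅
    · simp only [if_pos h, huniv_card]; exact hn
    · simp only [if_neg h]
      rcases hS with h0 | ⟨ho, _⟩
      · exact absurd (Finset.card_eq_zero.mp h0) h
      · exact ho
  · intro S hS
    simp only [Finset.mem_coe, Finset.mem_filter, Finset.mem_univ, true_and] at *
    by_cases h : S = Finset.univ
    · simp [if_pos h]
    · simp only [if_neg h]
      refine Or.inr ⟨hS, fun hc => h ?_⟩
      exact S.eq_univ_of_card (by simpa using hc)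
  · intro S hS
    simp only [Finset.mem_coe, Finset.mem_filter, Finset.mem_univ, true_and] at hS
    by_cases h : S = ∅
    · simp [h]
    · have hne : S ≠ Finset.univ := by
        rcases hS with h0 | ⟨_, hcn⟩
        · exact absurd (Finset.card_eq_zero.mp h0) h
        · intro hc; exact hcn (by rw [hc]; exact huniv_card)
      simp [h, hne]
  · intro S hS
    simp only [Finset.mem_coe, Finset.mem_filter, Finset.mem_univ, true_and] at hS
    by_cases h : S = Finset.univ
    · simp [h, huniv_ne]
    · have hne : S ≠ ∅ := by
        intro hc
        rw [hc, Finset.card_empty] at hS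
        simp at hS
      simp [h, hne]

/-- For odd `n`, there is a balanced `(n-1)`-th order dual sensitive function on `n`
variables: the function which is `0` at `y` and at all points at odd distance `≤ n-2`
from `y`, is `1` at all points at even distance in `[2, n-1]` from `y`, and is `1`
at the complement of `y`. -/
theorem stmt4 (n : ℕ) (hn : Odd n) (y : Fin n → Bool) :
    ∃ g : (Fin n → Bool) → Bool,
      g y = false ∧
      (∀ S : Finset (Fin n), Odd S.card → S.card ≤ n - 2 → g (flipS y S) = false) ∧
      (∀ S : Finset (Fin n), Even S.card → 2 ≤ S.card → S.card ≤ n - 1 →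
        g (flipS y S) = true) ∧
      g (fun i => !y i) = true ∧
      (Finset.univ.filter (fun x : Fin n → Bool => g x = false)).card = 2 ^ (n - 1) ∧
      (∀ S : Finset (Fin n), 1 ≤ S.card → S.card ≤ n - 1 →
        (Odd S.card → g (flipS y S) = g y) ∧ (Even S.card → g (flipS y S) ≠ g y)) := by
  have hn0 : 0 < n := hn.pos
  have hnmod : n % 2 = 1 := Nat.odd_iff.mp hn
  set g : (Fin n → Bool) → Bool :=
    fun x => !decide ((Dst y x).card = 0 ∨ (Odd (Dst y x).card ∧ (Dst y x).card ≠ n)) with hg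
  have hfalse : ∀ x, g x = false ↔
      ((Dst y x).card = 0 ∨ (Odd (Dst y x).card ∧ (Dst y x).card ≠ n)) := by
    intro x
    simp only [hg, Bool.not_eq_false', decide_eq_true_eq]
  have htrue : ∀ x, g x = true ↔
      ¬ ((Dst y x).card = 0 ∨ (Odd (Dst y x).card ∧ (Dst y x).card ≠ n)) := by
    intro x
    simp only [hg, Bool.not_eq_true', decide_eq_false_iff_not]
  have hgy : g y = false := by
    rw [hfalse]; left; simp [Dst_self]
  have hodd : ∀ S : Finset (Fin n), Odd S.card → S.card ≤ n - 2 → g (flipS y S) = false := by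
    intro S hS hle
    rw [hfalse, Dst_flip]
    right
    have := Nat.odd_iff.mp hS
    exact ⟨hS, by omega⟩
  have heven : ∀ S : Finset (Fin n), Even S.card → 2 ≤ S.card → S.card ≤ n - 1 →
      g (flipS y S) = true := by
    intro S hS h2 _
    rw [htrue, Dst_flip]
    push_neg
    have := Nat.even_iff.mp hS
    refine ⟨by omega, fun ho => absurd (Nat.odd_iff.mp ho) (by omega)⟩
  have hcompl : g (fun i => !y i) = true := by
    rw [htrue, Dst_compl]
    push_neg
    have : (Finset.univ : Finset (Fin n)).card = n := by simp
    rw [this]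
    exact ⟨by omega, fun _ => rfl⟩
  refine ⟨g, hgy, hodd, heven, hcompl, ?_, ?_⟩
  · rw [← T_card hn]
    apply Finset.card_nbij' (Dst y) (flipS y)
    · intro x hx
      simp only [Finset.mem_coe, Finset.mem_filter, Finset.mem_univ, true_and] at *
      rwa [hfalse] at hx
    · intro S hS
      simp only [Finset.mem_coe, Finset.mem_filter, Finset.mem_univ, true_and] at *
      rw [hfalse, Dst_flip]
      exact hS
    · intro x _; exact flip_Dst y x
    · intro S _; exact Dst_flip y S
  · intro S h1 hle
    constructor
    · intro ho
      rw [hgy]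
      have := Nat.odd_iff.mp ho
      exact hodd S ho (by omega)
    · intro he
      rw [hgy]
      have := Nat.even_iff.mp he
      rw [heven S he (by omega) hle]
      simp
end

section
/- Let f be a Boolean function of the form f(x,y) = ⊕_{a ∈ F_2^{n1}} (indicator that x = a) · g_a(y), where g_{1^{n1}} = sym^k_{n2} and g_a ≡ 1 for every a with n1 > wt(a) ≥ n1 − k. Then f is k-th order sensitive at the point (1^{n1}, 0^{n2}). -/
/-- Hamming weight of a Boolean vector. -/
def wt {ι : Type*} [Fintype ι] (x : ι → Bool) : ℕ :=
  (Finset.univ.filter (fun i => x i = true)).card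

/-- `sym^k_m(x) = (Σ_{j=1}^k C(wt x, j)) mod 2`. -/
def symk (m k : ℕ) (x : Fin m → Bool) : Bool :=
  decide (Odd (∑ j ∈ Finset.Icc 1 k, (wt x).choose j))

lemma sum_choose_odd (w k : ℕ) (h1 : 1 ≤ w) (h2 : w ≤ k) :
    Odd (∑ j ∈ Finset.Icc 1 k, w.choose j) := by
  have hsum : ∑ j ∈ Finset.range (k+1), w.choose j = 2 ^ w := by
    rw [← Nat.sum_range_choose w]
    symm
    apply Finset.sum_subset
    · exact Finset.range_subset_range.2 (by omega)
    · intro x _ hx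
      simp only [Finset.mem_range] at hx
      exact Nat.choose_eq_zero_of_lt (by omega)
  have hsplit : ∑ j ∈ Finset.range (k+1), w.choose j
      = w.choose 0 + ∑ j ∈ Finset.Icc 1 k, w.choose j := by
    rw [← Finset.Ico_add_one_right_eq_Icc, Finset.range_eq_Ico,
      ← Finset.sum_Ico_consecutive _ (Nat.zero_le 1) (by omega : 1 ≤ k+1)]
    congr 1
  have hval : ∑ j ∈ Finset.Icc 1 k, w.choose j = 2 ^ w - 1 := by
    simp only [Nat.choose_zero_right] at hsplit
    omega
  rw [hval]
  have heven : Even (2 ^ w) := (Nat.even_pow).2 ⟨even_two, by omega⟩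
  exact Nat.Even.sub_odd (Nat.one_le_two_pow) heven odd_one

/-- The function `f(x,y) = g_x(y)` with `g_{1^{n1}} = sym^k_{n2}` and `g_a ≡ 1` for
`n1 - k ≤ wt a < n1` is `k`-th order sensitive at `(1^{n1}, 0^{n2})`. -/
theorem stmt9 (n1 n2 k : ℕ) (hk1 : k ≤ n1) (hk2 : k ≤ n2)
    (g : (Fin n1 → Bool) → (Fin n2 → Bool) → Bool)
    (hone : g (fun _ => true) = symk n2 k)
    (hbig : ∀ a : Fin n1 → Bool, wt a < n1 → n1 - k ≤ wt a → g a = fun _ => true) :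
    ∀ S : Finset (Fin n1 ⊕ Fin n2), 1 ≤ S.card → S.card ≤ k →
      g ((flipS (Sum.elim (fun _ => true) (fun _ => false)) S) ∘ Sum.inl)
        ((flipS (Sum.elim (fun _ => true) (fun _ => false)) S) ∘ Sum.inr) ≠
      g ((Sum.elim (fun _ => true) (fun _ => false) : Fin n1 ⊕ Fin n2 → Bool) ∘ Sum.inl)
        ((Sum.elim (fun _ => true) (fun _ => false) : Fin n1 ⊕ Fin n2 → Bool) ∘ Sum.inr) := by
  intro S hS1 hSk
  set z : Fin n1 ⊕ Fin n2 → Bool := Sum.elim (fun _ => true) (fun _ => false) with hz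
  -- the base value is false
  have hbase : g (z ∘ Sum.inl) (z ∘ Sum.inr) = false := by
    have h1 : (z ∘ Sum.inl) = (fun _ : Fin n1 => true) := rfl
    have h2 : (z ∘ Sum.inr) = (fun _ : Fin n2 => false) := rfl
    rw [h1, h2, hone]
    have hw : wt (fun _ : Fin n2 => false) = 0 := by simp [wt]
    simp only [symk, hw, decide_eq_false_iff_not]
    intro hodd
    rw [Finset.sum_eq_zero (fun j hj => by
      simp only [Finset.mem_Icc] at hj
      exact Nat.choose_eq_zero_of_lt (by omega))] at hodd
    exact absurd (Nat.odd_iff.mp hodd) (by omega)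
  rw [hbase]
  -- split S into its left and right parts
  set A : Finset (Fin n1) := Finset.univ.filter (fun i => Sum.inl i ∈ S) with hA
  set B : Finset (Fin n2) := Finset.univ.filter (fun j => Sum.inr j ∈ S) with hB
  have hAcard : A.card ≤ S.card := by
    apply Finset.card_le_card_of_injOn Sum.inl
    · intro i hi; simpa [hA] using hi
    · intro a _ b _ h; exact Sum.inl_injective h
  have hBcard : B.card ≤ S.card := by
    apply Finset.card_le_card_of_injOn Sum.inr
    · intro j hj; simpa [hB] using hj
    · intro a _ b _ h; exact Sum.inr_injective h
  -- compute the flipped coordinates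
  have hx : (flipS z S ∘ Sum.inl) = fun i : Fin n1 => if Sum.inl i ∈ S then false else true := by
    funext i; simp [flipS, hz]
  have hy : (flipS z S ∘ Sum.inr) = fun j : Fin n2 => if Sum.inr j ∈ S then true else false := by
    funext j; simp [flipS, hz]
  have hwx : wt (flipS z S ∘ Sum.inl) = n1 - A.card := by
    rw [hx]
    unfold wt
    have : (Finset.univ.filter
        (fun i : Fin n1 => (if Sum.inl i ∈ S then false else true) = true)) = Aᶜ := by
      ext i
      by_cases h : Sum.inl i ∈ S <;> simp [h, hA]
    rw [this, Finset.card_compl]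
    simp
  have hwy : wt (flipS z S ∘ Sum.inr) = B.card := by
    rw [hy]
    unfold wt
    congr 1
    ext j
    by_cases h : Sum.inr j ∈ S <;> simp [h, hB]
  by_cases hA0 : A.card = 0
  -- case: no left coordinates flipped
  · have hBpos : 1 ≤ B.card := by
      obtain ⟨s, hs⟩ := Finset.card_pos.mp hS1
      rcases s with i | j
      · exfalso
        have : i ∈ A := by simp [hA, hs]
        have := Finset.card_pos.mpr ⟨i, this⟩
        omega
      · exact Finset.card_pos.mpr ⟨j, by simp [hB, hs]⟩
    have hxall : (flipS z S ∘ Sum.inl) = (fun _ : Fin n1 => true) := by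
      rw [hx]
      funext i
      have : Sum.inl i ∉ S := by
        intro h
        have : i ∈ A := by simp [hA, h]
        have := Finset.card_pos.mpr ⟨i, this⟩
        omega
      simp [this]
    rw [hxall, hone]
    simp only [symk, hwy, ne_eq, decide_eq_false_iff_not, not_not]
    exact sum_choose_odd _ _ hBpos (le_trans hBcard hSk)
  -- case: some left coordinate flipped
  · have hApos : 1 ≤ A.card := by omega
    have hn1pos : 0 < n1 := by
      obtain ⟨i, _⟩ := Finset.card_pos.mp hApos
      exact Fin.pos i
    have h1 : wt (flipS z S ∘ Sum.inl) < n1 := by rw [hwx]; omega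
    have h2 : n1 - k ≤ wt (flipS z S ∘ Sum.inl) := by
      rw [hwx]
      have : A.card ≤ k := le_trans hAcard hSk
      omega
    rw [hbig _ h1 h2]
    simp
end

section
/- Let f : F_2^s → F_2 and g_1,...,g_s : F_2^u → F_2, and define f̂ : F_2^{us} → F_2 by f̂(x_1,...,x_s) = f(g_1(x_1),...,g_s(x_s)) where each x_i ∈ F_2^u. Then for any w = (w_1,...,w_s) ∈ (F_2^u)^s, the Walsh transform satisfies W_{f̂}(w) = 2^{−s} Σ_{v ∈ F_2^s} W_f(v) ∏_{i=1}^s W_{v_i g_i}(w_i). -/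
/-- Inner product `w · x = ⊕_{i : w_i = 1} x_i`. -/
def dotB {ι : Type*} [Fintype ι] (b y : ι → Bool) : Bool :=
  decide (Odd ((Finset.univ.filter (fun i => b i = true ∧ y i = true)).card))

/-- Walsh transform `W_h(w) = Σ_x (-1)^{h(x) ⊕ w·x}`. -/
def Wal {ι : Type*} [Fintype ι] [DecidableEq ι] (h : (ι → Bool) → Bool) (w : ι → Bool) : ℤ :=
  ∑ x : ι → Bool, if xor (h x) (dotB w x) then -1 else 1

namespace S14
def χ (b : Bool) : ℤ := if b then -1 else 1

lemma Wal_eq {ι : Type*} [Fintype ι] [DecidableEq ι] (h : (ι → Bool) → Bool) (w : ι → Bool) :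
    Wal h w = ∑ x : ι → Bool, χ (xor (h x) (dotB w x)) := rfl

lemma chi_xor (a b : Bool) : χ (xor a b) = χ a * χ b := by cases a <;> cases b <;> simp [χ]

lemma chi_and_mul (a b c : Bool) : χ (a && b) * χ (a && c) = χ (a && xor b c) := by
  cases a <;> cases b <;> cases c <;> simp [χ]

lemma chi_dot {ι : Type*} [Fintype ι] (b y : ι → Bool) :
    χ (dotB b y) = ∏ i, χ (b i && y i) := by
  classical
  have h1 : ∏ i, χ (b i && y i)
      = ∏ _i ∈ Finset.univ.filter (fun i => b i = true ∧ y i = true), (-1 : ℤ) := by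
    rw [Finset.prod_filter]
    refine Finset.prod_congr rfl fun i _ => ?_
    cases hb : b i <;> cases hy : y i <;> simp [χ, hb, hy]
  rw [h1, Finset.prod_const]
  unfold dotB
  by_cases h : Odd (Finset.univ.filter (fun i => b i = true ∧ y i = true)).card
  · simp [χ, h, h.neg_one_pow]
  · simp [χ, h, (Nat.not_odd_iff_even.mp h).neg_one_pow]

lemma sum_chi {ι : Type*} [Fintype ι] [DecidableEq ι] (t : ι → Bool) :
    ∑ v : ι → Bool, ∏ i, χ (v i && t i)
      = if t = (fun _ => false) then (2:ℤ)^(Fintype.card ι) else 0 := by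
  classical
  have key : ∑ v : ι → Bool, ∏ i, χ (v i && t i)
      = ∏ i, ∑ b : Bool, χ (b && t i) := by
    rw [Finset.prod_univ_sum, Fintype.piFinset_univ]
  rw [key]
  by_cases ht : t = fun _ => false
  · simp [ht, χ, Finset.card_univ]
  · obtain ⟨i, hi⟩ : ∃ i, t i = true := by
      by_contra hc
      push_neg at hc
      exact ht (funext fun i => by simpa using hc i)
    refine Eq.trans (Finset.prod_eq_zero (Finset.mem_univ i) ?_) (by simp [ht])
    simp [hi, χ]
end S14


open S14

/-- Walsh transform of the composition `f̂(x₁,…,x_s) = f(g₁(x₁),…,g_s(x_s))`: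
`2^s · W_{f̂}(w) = Σ_v W_f(v) ∏_i W_{v_i g_i}(w_i)`. -/
theorem stmt14 (s u : ℕ) (f : (Fin s → Bool) → Bool)
    (g : Fin s → (Fin u → Bool) → Bool) (w : Fin s × Fin u → Bool) :
    (2 ^ s : ℤ) *
        Wal (fun z : Fin s × Fin u → Bool => f (fun i => g i (fun j => z (i, j)))) w =
      ∑ v : Fin s → Bool,
        Wal f v * ∏ i : Fin s, Wal (fun xi => v i && g i xi) (fun j => w (i, j)) := by
  classical
  set C : (Fin s → Fin u → Bool) → ℤ :=
    fun p => ∏ i, χ (dotB (fun j => w (i, j)) (p i)) with hC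
  set G : (Fin s → Fin u → Bool) → (Fin s → Bool) := fun p i => g i (p i) with hG
  -- RHS computation
  have hprod : ∀ v : Fin s → Bool,
      (∏ i : Fin s, Wal (fun xi => v i && g i xi) (fun j => w (i, j)))
        = ∑ p : Fin s → Fin u → Bool,
            ∏ i, χ (xor (v i && g i (p i)) (dotB (fun j => w (i, j)) (p i))) := by
    intro v
    rw [show (∏ i : Fin s, Wal (fun xi => v i && g i xi) (fun j => w (i, j)))
        = ∏ i : Fin s, ∑ xi : Fin u → Bool,
            χ (xor (v i && g i xi) (dotB (fun j => w (i, j)) xi)) from rfl,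
      Finset.prod_univ_sum, Fintype.piFinset_univ]
  have step : ∀ (y : Fin s → Bool) (p : Fin s → Fin u → Bool),
      (∑ v : Fin s → Bool, χ (xor (f y) (dotB v y)) *
          ∏ i, χ (xor (v i && g i (p i)) (dotB (fun j => w (i, j)) (p i))))
        = (if y = G p then (2:ℤ)^s else 0) * (χ (f y) * C p) := by
    intro y p
    have h1 : ∀ v : Fin s → Bool, χ (xor (f y) (dotB v y)) *
          ∏ i, χ (xor (v i && g i (p i)) (dotB (fun j => w (i, j)) (p i)))
        = (∏ i, χ (v i && xor (y i) (g i (p i)))) * (χ (f y) * C p) := by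
      intro v
      rw [chi_xor, chi_dot,
        show (∏ i, χ (xor (v i && g i (p i)) (dotB (fun j => w (i, j)) (p i))))
          = (∏ i, χ (v i && g i (p i))) * C p by
            rw [hC, ← Finset.prod_mul_distrib]
            exact Finset.prod_congr rfl fun i _ => chi_xor _ _,
        show (∏ i, χ (v i && xor (y i) (g i (p i))))
          = (∏ i, χ (v i && y i)) * ∏ i, χ (v i && g i (p i)) by
            rw [← Finset.prod_mul_distrib]
            exact Finset.prod_congr rfl fun i _ => (chi_and_mul _ _ _).symm]
      ring
    rw [Finset.sum_congr rfl (fun v _ => h1 v), ← Finset.sum_mul, sum_chi]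
    have hcond : ((fun i => xor (y i) (g i (p i))) = (fun _ => false)) ↔ (y = G p) := by
      constructor <;> intro h
      · funext i
        have := congrFun h i
        revert this
        cases hy : y i <;> cases hg : g i (p i) <;> simp [hG, hy, hg]
      · funext i
        have := congrFun h i
        simp only [hG] at this
        simp [this]
    rw [if_congr hcond rfl rfl, Fintype.card_fin]
  have hRHS : (∑ v : Fin s → Bool,
        Wal f v * ∏ i : Fin s, Wal (fun xi => v i && g i xi) (fun j => w (i, j)))
      = ∑ p : Fin s → Fin u → Bool, (2:ℤ)^s * (χ (f (G p)) * C p) := by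
    calc (∑ v : Fin s → Bool,
          Wal f v * ∏ i : Fin s, Wal (fun xi => v i && g i xi) (fun j => w (i, j)))
        = ∑ v : Fin s → Bool, ∑ y : Fin s → Bool, ∑ p : Fin s → Fin u → Bool,
            χ (xor (f y) (dotB v y)) *
              ∏ i, χ (xor (v i && g i (p i)) (dotB (fun j => w (i, j)) (p i))) := by
          refine Finset.sum_congr rfl fun v _ => ?_
          rw [Wal_eq, hprod, Finset.sum_mul_sum]
      _ = ∑ y : Fin s → Bool, ∑ p : Fin s → Fin u → Bool, ∑ v : Fin s → Bool,
            χ (xor (f y) (dotB v y)) *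
              ∏ i, χ (xor (v i && g i (p i)) (dotB (fun j => w (i, j)) (p i))) := by
          rw [Finset.sum_comm]
          exact Finset.sum_congr rfl fun y _ => Finset.sum_comm
      _ = ∑ y : Fin s → Bool, ∑ p : Fin s → Fin u → Bool,
            (if y = G p then (2:ℤ)^s else 0) * (χ (f y) * C p) := by
          exact Finset.sum_congr rfl fun y _ => Finset.sum_congr rfl fun p _ => step y p
      _ = ∑ p : Fin s → Fin u → Bool, ∑ y : Fin s → Bool,
            (if y = G p then ((2:ℤ)^s * (χ (f y) * C p)) else 0) := by
          rw [Finset.sum_comm]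
          refine Finset.sum_congr rfl fun p _ => Finset.sum_congr rfl fun y _ => ?_
          by_cases h : y = G p <;> simp [h]
      _ = ∑ p : Fin s → Fin u → Bool, (2:ℤ)^s * (χ (f (G p)) * C p) := by
          refine Finset.sum_congr rfl fun p _ => ?_
          rw [Finset.sum_ite_eq' Finset.univ (G p)
            (fun y => (2:ℤ)^s * (χ (f y) * C p))]
          simp
  -- LHS computation
  have hz : ∀ z : Fin s × Fin u → Bool,
      χ (dotB w z) = ∏ i : Fin s, χ (dotB (fun j => w (i, j)) (fun j => z (i, j))) := by
    intro z
    rw [chi_dot, Fintype.prod_prod_type]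
    exact Finset.prod_congr rfl fun i _ => (chi_dot _ _).symm
  have hLHS : (2 ^ s : ℤ) *
        Wal (fun z : Fin s × Fin u → Bool => f (fun i => g i (fun j => z (i, j)))) w
      = ∑ p : Fin s → Fin u → Bool, (2:ℤ)^s * (χ (f (G p)) * C p) := by
    rw [Wal_eq, Finset.mul_sum]
    rw [show (∑ z : Fin s × Fin u → Bool, (2:ℤ)^s *
          χ (xor (f (fun i => g i (fun j => z (i, j)))) (dotB w z)))
        = ∑ z : Fin s × Fin u → Bool,
            (fun p : Fin s → Fin u → Bool => (2:ℤ)^s * (χ (f (G p)) * C p))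
              ((Equiv.curry (Fin s) (Fin u) Bool) z) by
          refine Finset.sum_congr rfl fun z _ => ?_
          rw [chi_xor, hz]
          simp only [Equiv.curry_apply, Function.curry, hG, hC]
          ring_nf
          rfl]
    exact Equiv.sum_comp (Equiv.curry (Fin s) (Fin u) Bool)
      (fun p => (2:ℤ)^s * (χ (f (G p)) * C p))
  rw [hLHS, hRHS]
end

section
/- With f̂(x_1,...,x_s) = f(g_1(x_1),...,g_s(x_s)) where each g_i : F_2^u → F_2 is balanced, for every w = (w_1,...,w_s) we have W_{f̂}(w) = 2^{−s} W_f(v') ∏_{i=1}^s ((1+(−1)^{v'_i})/2 · 2^u + (1−(−1)^{v'_i})/2 · W_{g_i}(w_i)), where v' ∈ F_2^s has v'_i = 1 iff w_i ≠ 0. -/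
def chi (b : Bool) : ℚ := if b then -1 else 1

lemma chi_xor (a b : Bool) : chi (xor a b) = chi a * chi b := by
  cases a <;> cases b <;> simp [chi]

lemma chi_and_and (a b c : Bool) : chi (a && b) * chi (a && c) = chi (a && xor b c) := by
  cases a <;> cases b <;> cases c <;> simp [chi]

lemma prod_ite_neg_one {ι : Type*} (s : Finset ι) (p : ι → Prop) [DecidablePred p] :
    ∏ i ∈ s, (if p i then (-1:ℚ) else 1) = (-1) ^ (s.filter p).card := by
  rw [Finset.prod_ite, Finset.prod_const, Finset.prod_const, one_pow, mul_one]

lemma chi_dotB {ι : Type*} [Fintype ι] (b y : ι → Bool) :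
    chi (dotB b y) = ∏ i, chi (b i && y i) := by
  have h : ∀ i : ι, chi (b i && y i) = if (b i = true ∧ y i = true) then (-1:ℚ) else 1 := by
    intro i; cases hb : b i <;> cases hy : y i <;> simp [chi]
  simp only [h]
  rw [prod_ite_neg_one]
  unfold dotB chi
  rcases Nat.even_or_odd ((Finset.univ.filter (fun i => b i = true ∧ y i = true)).card) with he | ho
  · rw [he.neg_one_pow]; simp [Nat.not_odd_iff_even.mpr he]
  · rw [ho.neg_one_pow]; simp [ho]

lemma Wal_eq {ι : Type*} [Fintype ι] [DecidableEq ι] (h : (ι → Bool) → Bool) (w : ι → Bool) :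
    ((Wal h w : ℤ) : ℚ) = ∑ x : ι → Bool, chi (xor (h x) (dotB w x)) := by
  unfold Wal chi
  push_cast [apply_ite (Int.cast : ℤ → ℚ)]
  rfl

lemma sum_bool_chi (c : Bool) : ∑ b : Bool, chi (b && c) = if c then 0 else 2 := by
  cases c <;> simp [chi]

lemma sum_pi_chi {ι : Type*} [Fintype ι] [DecidableEq ι] (t : ι → Bool) :
    ∑ v : ι → Bool, ∏ i, chi (v i && t i) =
      if (∀ i, t i = false) then (2:ℚ) ^ Fintype.card ι else 0 := by
  rw [← Fintype.piFinset_univ,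
    ← Finset.prod_univ_sum (t := fun _ : ι => (Finset.univ : Finset Bool))
      (f := fun i b => chi (b && t i))]
  simp only [sum_bool_chi]
  by_cases h : ∀ i, t i = false
  · rw [if_pos h, Finset.prod_congr rfl (fun i _ => by rw [h i]),
      Finset.prod_const, Finset.card_univ]; norm_num
  · rw [if_neg h]
    push_neg at h
    obtain ⟨i, hi⟩ := h
    exact Finset.prod_eq_zero (Finset.mem_univ i) (by simp [Bool.ne_false_iff.mp hi])

lemma inversion {ι : Type*} [Fintype ι] [DecidableEq ι] (f : (ι → Bool) → Bool) (y : ι → Bool) :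
    ∑ v : ι → Bool, ((Wal f v : ℤ) : ℚ) * chi (dotB v y) = 2 ^ Fintype.card ι * chi (f y) := by
  simp only [Wal_eq, Finset.sum_mul]
  rw [Finset.sum_comm]
  have key : ∀ x v : ι → Bool, chi (xor (f x) (dotB v x)) * chi (dotB v y)
      = chi (f x) * ∏ i, chi (v i && xor (x i) (y i)) := by
    intro x v
    rw [chi_xor, mul_assoc, chi_dotB, chi_dotB, ← Finset.prod_mul_distrib]
    exact congrArg _ (Finset.prod_congr rfl fun i _ => chi_and_and _ _ _)
  simp only [key, ← Finset.mul_sum, sum_pi_chi]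
  rw [Finset.sum_eq_single y]
  · rw [if_pos fun i => by simp, mul_comm]
  · intro x _ hxy
    rw [if_neg, mul_zero]
    intro hall
    exact hxy (funext fun i => by simpa using hall i)
  · intro hy; exact absurd (Finset.mem_univ y) hy

/-- Walsh transform of a composition with balanced inner functions:
`2^s W_{f̂}(w) = W_f(v') ∏_i ((1+(-1)^{v'_i})/2 · 2^u + (1-(-1)^{v'_i})/2 · W_{g_i}(w_i))`
where `v'_i = 1` iff `w_i ≠ 0`. -/
theorem stmt15 (s u : ℕ) (f : (Fin s → Bool) → Bool)
    (g : Fin s → (Fin u → Bool) → Bool)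
    (hbal : ∀ i, Wal (g i) (fun _ => false) = 0) (w : Fin s × Fin u → Bool) :
    (2 ^ s : ℚ) *
        (Wal (fun z : Fin s × Fin u → Bool => f (fun i => g i (fun j => z (i, j)))) w : ℚ) =
      (Wal f (fun i => decide (∃ j, w (i, j) = true)) : ℚ) *
        ∏ i : Fin s,
          ((1 + (if (∃ j, w (i, j) = true) then (-1 : ℚ) else 1)) / 2 * 2 ^ u +
            (1 - (if (∃ j, w (i, j) = true) then (-1 : ℚ) else 1)) / 2 *
              (Wal (g i) (fun j => w (i, j)) : ℚ)) := by
  set T : Fin s → Bool → ℚ := fun i b =>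
    ∑ x : Fin u → Bool, chi (b && g i x) * ∏ j, chi (w (i, j) && x j) with hTdef
  have hTtrue : ∀ i, T i true = ((Wal (g i) (fun j => w (i, j)) : ℤ) : ℚ) := by
    intro i
    rw [Wal_eq]
    refine Finset.sum_congr rfl fun x _ => ?_
    rw [chi_xor, chi_dotB]
    simp
  have hTfalse : ∀ i, T i false =
      if (∀ j, w (i, j) = false) then (2 : ℚ) ^ u else 0 := by
    intro i
    have h1 : T i false = ∑ x : Fin u → Bool, ∏ j, chi (x j && w (i, j)) := by
      refine Finset.sum_congr rfl fun x _ => ?_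
      simp [chi, Bool.and_comm]
    rw [h1, sum_pi_chi, Fintype.card_fin]
    congr 1
  have keyA : (2 ^ s : ℚ) *
      ((Wal (fun z : Fin s × Fin u → Bool => f (fun i => g i (fun j => z (i, j)))) w : ℤ) : ℚ)
      = ∑ v : Fin s → Bool, ((Wal f v : ℤ) : ℚ) * ∏ i, T i (v i) := by
    rw [Wal_eq, Finset.mul_sum]
    have step1 : ∀ z : Fin s × Fin u → Bool,
        (2 ^ s : ℚ) * chi (xor (f (fun i => g i (fun j => z (i, j)))) (dotB w z))
        = ∑ v : Fin s → Bool, ((Wal f v : ℤ) : ℚ) *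
            (chi (dotB v (fun i => g i (fun j => z (i, j)))) * chi (dotB w z)) := by
      intro z
      rw [chi_xor, ← mul_assoc]
      have hinv := inversion f (fun i => g i (fun j => z (i, j)))
      rw [Fintype.card_fin] at hinv
      rw [← hinv, Finset.sum_mul]
      simp only [mul_assoc]
    simp only [step1]
    rw [Finset.sum_comm]
    refine Finset.sum_congr rfl fun v _ => ?_
    rw [← Finset.mul_sum]
    congr 1
    have hz : ∀ z : Fin s × Fin u → Bool,
        chi (dotB v (fun i => g i (fun j => z (i, j)))) * chi (dotB w z)
        = ∏ i, (chi (v i && g i (fun j => z (i, j))) * ∏ j, chi (w (i, j) && z (i, j))) := by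
      intro z
      rw [chi_dotB, chi_dotB, Fintype.prod_prod_type, ← Finset.prod_mul_distrib]
    simp only [hz]
    rw [Fintype.sum_equiv (Equiv.curry (Fin s) (Fin u) Bool)
      (fun z => ∏ i, (chi (v i && g i (fun j => z (i, j))) * ∏ j, chi (w (i, j) && z (i, j))))
      (fun x => ∏ i, (chi (v i && g i (x i)) * ∏ j, chi (w (i, j) && x i j)))
      (fun z => rfl)]
    rw [← Fintype.piFinset_univ,
      ← Finset.prod_univ_sum (t := fun _ : Fin s => (Finset.univ : Finset (Fin u → Bool)))
        (f := fun i y => chi (v i && g i y) * ∏ j, chi (w (i, j) && y j))]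
  rw [keyA, Finset.sum_eq_single (fun i => decide (∃ j, w (i, j) = true))]
  · congr 1
    refine Finset.prod_congr rfl fun i _ => ?_
    by_cases hi : ∃ j, w (i, j) = true
    · rw [if_pos hi]
      simp only [decide_eq_true hi, hTtrue i]
      ring
    · have hall : ∀ j, w (i, j) = false := by
        intro j
        rcases Bool.eq_false_or_eq_true (w (i, j)) with h | h
        · exact absurd ⟨j, h⟩ hi
        · exact h
      rw [if_neg hi]
      simp only [decide_eq_false hi, hTfalse i, if_pos hall]
      ring
  · intro v _ hv
    have hex : ∃ i, v i ≠ decide (∃ j, w (i, j) = true) := by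
      by_contra hc
      push_neg at hc
      exact hv (funext hc)
    obtain ⟨i, hi⟩ := hex
    have hzero : T i (v i) = 0 := by
      cases hvi : v i
      · have hex2 : ∃ j, w (i, j) = true := by
          by_contra hc
          rw [hvi, decide_eq_false hc] at hi
          exact hi rfl
        obtain ⟨j, hj⟩ := hex2
        rw [hTfalse i, if_neg (show ¬∀ j, w (i, j) = false from
          fun hall => by rw [hall j] at hj; exact Bool.false_ne_true hj)]
      · have hnex : ¬∃ j, w (i, j) = true := by
          intro hc
          rw [hvi, decide_eq_true hc] at hi
          exact hi rfl
        have hall : (fun j => w (i, j)) = (fun _ => false) := by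
          funext j
          rcases Bool.eq_false_or_eq_true (w (i, j)) with h | h
          · exact absurd ⟨j, h⟩ hnex
          · exact h
        rw [hTtrue i, hall, hbal i, Int.cast_zero]
    rw [Finset.prod_eq_zero (Finset.mem_univ i) hzero, mul_zero]
  · intro h
    exact absurd (Finset.mem_univ _) h
end

section
/- Let f be a k-th order sensitive function on d variables with witnessing point y ∈ F_2^d. Define y^1 = y, y^u ∈ F_2^{d^u} the concatenation of d copies of y^{u−1}, f^1 = f, and f^u(x) = f( f^{u−1}(block_1 of x) ⊕ f^{u−1}(y^{u−1}) ⊕ y_1, ..., f^{u−1}(block_d of x) ⊕ f^{u−1}(y^{u−1}) ⊕ y_d ), where block_j of x is the j-th consecutive block of d^{u−1} coordinates. Then f^u is k-th order sensitive at the point y^u, and f^u(y^u) = f(y). -/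
/-- `Yu d y u` is the concatenation of `d^u` copies of `y`, i.e. `y^{u+1}` on
`d^{u+1}` coordinates (indexed by tuples `Fin (u+1) → Fin d`). -/
def Yu (d : ℕ) (y : Fin d → Bool) (u : ℕ) : (Fin (u + 1) → Fin d) → Bool :=
  fun t => y (t (Fin.last u))

/-- The modified recursive amplification `f^{u+1}` of a base function `f` with
witnessing point `y`:
`f^{u+1}(x) = f(…, f^u(block_j x) ⊕ f^u(y^u) ⊕ y_j, …)`. -/
def Fu (d : ℕ) (f : (Fin d → Bool) → Bool) (y : Fin d → Bool) :
    (u : ℕ) → ((Fin (u + 1) → Fin d) → Bool) → Bool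
  | 0 => fun x => f (fun i => x (fun _ => i))
  | u + 1 => fun x => f (fun j =>
      xor (xor (Fu d f y u (fun t => x (Fin.cons j t))) (Fu d f y u (Yu d y u))) (y j))

/-- If `f` is `k`-th order sensitive at `y`, then every `f^u` is `k`-th order
sensitive at `y^u`, and `f^u(y^u) = f(y)`. -/
theorem stmt17 (d k : ℕ) (f : (Fin d → Bool) → Bool) (y : Fin d → Bool)
    (hs : ∀ S : Finset (Fin d), 1 ≤ S.card → S.card ≤ k → f (flipS y S) ≠ f y) :
    ∀ u : ℕ,
      (∀ S : Finset (Fin (u + 1) → Fin d), 1 ≤ S.card → S.card ≤ k →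
        Fu d f y u (flipS (Yu d y u) S) ≠ Fu d f y u (Yu d y u)) ∧
      Fu d f y u (Yu d y u) = f y := by
  have inj1 : Function.Injective (fun (t : Fin 1 → Fin d) => t 0) := by
    intro a b h
    funext x
    have hx : x = 0 := Subsingleton.elim x 0
    rw [hx]; exact h
  intro u
  induction u with
  | zero =>
    have hval : Fu d f y 0 (Yu d y 0) = f y := rfl
    refine ⟨?_, hval⟩
    intro S h1 h2
    rw [hval]
    have hmem : ∀ i : Fin d, ((fun _ => i) ∈ S) ↔ i ∈ S.image (fun t => t 0) := by
      intro i
      constructor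
      · intro h; exact Finset.mem_image.mpr ⟨_, h, rfl⟩
      · intro h
        obtain ⟨t, ht, ht0⟩ := Finset.mem_image.mp h
        have : (fun _ => i : Fin 1 → Fin d) = t := by
          funext x
          have hx : x = 0 := Subsingleton.elim x 0
          rw [hx, ht0]
        rwa [this]
    have key : (fun i => flipS (Yu d y 0) S (fun _ => i)) =
        flipS y (S.image (fun t => t 0)) := by
      funext i
      simp only [flipS, Yu, hmem i]
    show f (fun i => flipS (Yu d y 0) S (fun _ => i)) ≠ f y
    rw [key]
    refine hs _ ?_ ?_
    · rwa [Finset.card_image_of_injective S inj1]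
    · rwa [Finset.card_image_of_injective S inj1]
  | succ u ih =>
    obtain ⟨ihs, ihv⟩ := ih
    have hcons : ∀ (j : Fin d) (t : Fin (u+1) → Fin d),
        (Fin.cons j t : Fin (u+2) → Fin d) (Fin.last (u+1)) = t (Fin.last u) := by
      intro j t
      rw [← Fin.succ_last, Fin.cons_succ]
    have hyblock : ∀ j : Fin d,
        (fun t => Yu d y (u+1) (Fin.cons j t)) = Yu d y u := by
      intro j
      funext t
      simp only [Yu, hcons]
    have hval : Fu d f y (u+1) (Yu d y (u+1)) = f y := by
      show f _ = f y
      congr 1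
      funext j
      rw [hyblock j]
      simp
    refine ⟨?_, hval⟩
    intro S h1 h2
    rw [hval]
    set T := S.image (fun s => s 0) with hT
    have hT1 : 1 ≤ T.card :=
      Finset.card_pos.mpr (Finset.Nonempty.image (Finset.card_pos.mp h1) _)
    have hT2 : T.card ≤ k := le_trans Finset.card_image_le h2
    have key : (fun j => xor (xor
          (Fu d f y u (fun t => flipS (Yu d y (u+1)) S (Fin.cons j t)))
          (Fu d f y u (Yu d y u))) (y j)) = flipS y T := by
      funext j
      set Sj := (S.filter (fun s => s 0 = j)).image Fin.tail with hSj
      have hmem : ∀ t, t ∈ Sj ↔ (Fin.cons j t : Fin (u+2) → Fin d) ∈ S := by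
        intro t
        constructor
        · intro ht
          simp only [hSj, Finset.mem_image, Finset.mem_filter] at ht
          obtain ⟨s, ⟨hsS, hs0⟩, hst⟩ := ht
          have hseq : s = Fin.cons j t := by
            rw [← hst, ← hs0]
            exact (Fin.cons_self_tail s).symm
          rwa [← hseq]
        · intro h
          simp only [hSj, Finset.mem_image, Finset.mem_filter]
          exact ⟨Fin.cons j t, ⟨h, rfl⟩, rfl⟩
      have hblock : (fun t => flipS (Yu d y (u+1)) S (Fin.cons j t)) =
          flipS (Yu d y u) Sj := by
        funext t
        simp only [flipS, Yu, hcons, hmem t]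
      rw [hblock]
      by_cases hj : j ∈ T
      · have hSjne : Sj.Nonempty := by
          rw [hT] at hj
          obtain ⟨s, hsS, hs0⟩ := Finset.mem_image.mp hj
          exact ⟨Fin.tail s, by
            simp only [hSj, Finset.mem_image, Finset.mem_filter]
            exact ⟨s, ⟨hsS, hs0⟩, rfl⟩⟩
        have h1' : 1 ≤ Sj.card := Finset.card_pos.mpr hSjne
        have h2' : Sj.card ≤ k :=
          le_trans (le_trans Finset.card_image_le (Finset.card_filter_le _ _)) h2
        have hne := ihs Sj h1' h2'
        have hflip : Fu d f y u (flipS (Yu d y u) Sj) = ! Fu d f y u (Yu d y u) := by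
          cases hb : Fu d f y u (Yu d y u) <;>
            cases hc : Fu d f y u (flipS (Yu d y u) Sj) <;> simp_all
        rw [hflip]
        generalize Fu d f y u (Yu d y u) = A
        cases A <;> simp [flipS, hj]
      · have hSje : ∀ t, t ∉ Sj := by
          intro t ht
          exact hj (Finset.mem_image.mpr ⟨_, (hmem t).mp ht, rfl⟩)
        have hempty : flipS (Yu d y u) Sj = Yu d y u := by
          funext t; simp [flipS, hSje t]
        rw [hempty]
        simp [flipS, hj]
    show f _ ≠ f y
    rw [key]
    exact hs T hT1 hT2
end
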